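/- arXiv:2411.15568 — 2 statements merged into one kernel-verified Lean document; each statement's English description precedes it below -/
import Mathlib

section
/- Let q be a power of a prime p, m a positive integer, f, g ∈ ℛ, and a, b ∈ 𝔽_q. Let d be a divisor of q^m − 1 and let {p₁, p₂, ..., p_r} be the collection of all primes dividing q^m − 1 but not d. Then N_{f,g,a,b}(q^m−1, q^m−1) ≥ Σ_{i=1}^{r} N_{f,g,a,b}(d, p_i d) + Σ_{i=1}^{r} N_{f,g,a,b}(p_i d, d) − (2r − 1)·N_{f,g,a,b}(d, d). -/
open scoped Classical

noncomputable section

/-- `W n = 2^{w(n)}` is the number of squarefree divisors of `n`,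
where `w(n)` is the number of distinct prime divisors of `n`. -/
def W (n : ℕ) : ℕ := 2 ^ n.primeFactors.card

/-- `theta e = φ(e)/e`. -/
def theta (e : ℕ) : ℝ := (Nat.totient e : ℝ) / (e : ℝ)

/-- Membership in the class ℛ of rational functions over `F` (relative to `n = q^m - 1`):
`f` is not of the form `c · x^j · h(x)^d` for any integer `j`, divisor `d > 1` of `n`,
`c ∈ F*` and rational function `h`. -/
def InCalR (F : Type*) [Field F] (n : ℕ) (f : RatFunc F) : Prop :=
  ¬ ∃ (c : F) (j : ℤ) (d : ℕ) (h : RatFunc F),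
      c ≠ 0 ∧ 1 < d ∧ d ∣ n ∧ f = RatFunc.C c * RatFunc.X ^ j * h ^ d

/-- The degree sum of a rational function: the sum of the degrees of its numerator
and denominator (in lowest terms). -/
def degSum {F : Type*} [Field F] (f : RatFunc F) : ℕ :=
  f.num.natDegree + f.denom.natDegree

/-- `x` is a zero or a pole of the rational function `f`. -/
def IsZeroOrPole {F : Type*} [Field F] (f : RatFunc F) (x : F) : Prop :=
  Polynomial.eval x f.num = 0 ∨ Polynomial.eval x f.denom = 0

/-- `x` is a primitive element of the finite field `F`, i.e. a generator of `F*`. -/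
def IsPrimitiveElem {F : Type*} [Field F] [Fintype F] (x : F) : Prop :=
  orderOf x = Fintype.card F - 1

/-- For a divisor `e` of `|F| - 1`, a nonzero element `x` is `e`-free if the only
divisor `d` of `e` such that `x = β^d` for some `β` is `d = 1`. -/
def IsEFree {F : Type*} [Field F] (e : ℕ) (x : F) : Prop :=
  x ≠ 0 ∧ ∀ d : ℕ, d ∣ e → (∃ β : F, β ^ d = x) → d = 1

/-- `NCount Fq f g a b e₁ e₂` is the number of `ε ∈ F ∖ S` (where `S` consists of `0`
together with the zeros and poles of `f` and `g`) such that `f(ε)` is `e₁`-free,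
`g(ε)` is `e₂`-free, `Tr_{F/Fq}(ε) = a` and `Tr_{F/Fq}(ε⁻¹) = b`. -/
def NCount (Fq : Type*) {F : Type*} [Field Fq] [Field F] [Algebra Fq F]
    (f g : RatFunc F) (a b : Fq) (e₁ e₂ : ℕ) : ℕ :=
  Set.ncard {ε : F | ¬ (ε = 0 ∨ IsZeroOrPole f ε ∨ IsZeroOrPole g ε) ∧
    IsEFree e₁ (f.eval (RingHom.id F) ε) ∧ IsEFree e₂ (g.eval (RingHom.id F) ε) ∧
    Algebra.trace Fq F ε = a ∧ Algebra.trace Fq F ε⁻¹ = b}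


lemma isEFree_of_dvd {F : Type*} [Field F] {e' e : ℕ} (h : e' ∣ e) {x : F}
    (hx : IsEFree e x) : IsEFree e' x :=
  ⟨hx.1, fun c hc hex => hx.2 c (hc.trans h) hex⟩

lemma isEFree_full {F : Type*} [Field F] {Q d : ℕ} (hQ : 0 < Q) (hd : d ∣ Q)
    {P : Finset ℕ} (hP : ∀ r, r ∈ P ↔ r.Prime ∧ r ∣ Q ∧ ¬ r ∣ d) {x : F}
    (h1 : IsEFree d x) (h2 : ∀ p ∈ P, IsEFree (p * d) x) : IsEFree Q x := by
  refine ⟨h1.1, fun c hc hex => ?_⟩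
  by_contra hc1
  have hc0 : c ≠ 0 := by
    rintro rfl
    exact hQ.ne' (Nat.eq_zero_of_zero_dvd hc)
  have hc2 : 2 ≤ c := by omega
  have hℓp : c.minFac.Prime := Nat.minFac_prime (by omega)
  have hℓc : c.minFac ∣ c := Nat.minFac_dvd c
  obtain ⟨β, hβ⟩ := hex
  have hpow : (β ^ (c / c.minFac)) ^ c.minFac = x := by
    rw [← pow_mul, Nat.div_mul_cancel hℓc, hβ]
  by_cases hld : c.minFac ∣ d
  · exact hℓp.one_lt.ne' (h1.2 c.minFac hld ⟨_, hpow⟩)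
  · have hmem : c.minFac ∈ P := (hP c.minFac).mpr ⟨hℓp, hℓc.trans hc, hld⟩
    exact hℓp.one_lt.ne' ((h2 c.minFac hmem).2 c.minFac (dvd_mul_right _ _) ⟨_, hpow⟩)

/-- **Sieving inequality (Lemma 3.5).** If `d ∣ q^m − 1` and `P = {p₁, …, p_r}` is the
set of all primes dividing `q^m − 1` but not `d`, then
`N(q^m−1, q^m−1) ≥ Σᵢ N(d, pᵢd) + Σᵢ N(pᵢd, d) − (2r−1)·N(d, d)`. -/
theorem stmt_4 (p k q m : ℕ) (hp : p.Prime) (hk : 0 < k) (hqpk : q = p ^ k) (hm : 0 < m)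
    (Fq F : Type*) [Field Fq] [Field F] [Algebra Fq F] [Fintype Fq] [Fintype F]
    (hcard_q : Fintype.card Fq = q) (hcard_F : Fintype.card F = q ^ m)
    (f g : RatFunc F)
    (hf : InCalR F (q ^ m - 1) f) (hg : InCalR F (q ^ m - 1) g)
    (a b : Fq) (d : ℕ) (hd : d ∣ q ^ m - 1)
    (P : Finset ℕ) (hP : ∀ r : ℕ, r ∈ P ↔ r.Prime ∧ r ∣ q ^ m - 1 ∧ ¬ r ∣ d) :
    (NCount Fq f g a b (q ^ m - 1) (q ^ m - 1) : ℝ) ≥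
      (∑ pi ∈ P, (NCount Fq f g a b d (pi * d) : ℝ)) +
        (∑ pi ∈ P, (NCount Fq f g a b (pi * d) d : ℝ)) -
        (2 * (P.card : ℝ) - 1) * (NCount Fq f g a b d d : ℝ) := by
  classical
  set Q := q ^ m - 1 with hQdef
  have hq2 : 2 ≤ q := by
    have := hp.two_le
    have hle : p ≤ p ^ k := Nat.le_self_pow hk.ne' p
    omega
  have hqm2 : 2 ≤ q ^ m := by
    have hle : q ≤ q ^ m := Nat.le_self_pow hm.ne' q
    omega
  have hQpos : 0 < Q := by omega
  -- the underlying sets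
  set A : ℕ → ℕ → Set F := fun e₁ e₂ =>
    {ε : F | ¬ (ε = 0 ∨ IsZeroOrPole f ε ∨ IsZeroOrPole g ε) ∧
      IsEFree e₁ (f.eval (RingHom.id F) ε) ∧ IsEFree e₂ (g.eval (RingHom.id F) ε) ∧
      Algebra.trace Fq F ε = a ∧ Algebra.trace Fq F ε⁻¹ = b} with hAdef
  have hfin : ∀ e₁ e₂, (A e₁ e₂).Finite := fun _ _ => Set.toFinite _
  set T : ℕ → ℕ → Finset F := fun e₁ e₂ => (hfin e₁ e₂).toFinset with hTdef
  have hcard : ∀ e₁ e₂, NCount Fq f g a b e₁ e₂ = (T e₁ e₂).card := fun e₁ e₂ =>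
    Set.ncard_eq_toFinset_card _ _
  have hmemT : ∀ e₁ e₂ (x : F), x ∈ T e₁ e₂ ↔ x ∈ A e₁ e₂ := fun _ _ _ =>
    Set.Finite.mem_toFinset _
  -- monotonicity
  have hsub : ∀ e₁ e₂ e₁' e₂', e₁' ∣ e₁ → e₂' ∣ e₂ → T e₁ e₂ ⊆ T e₁' e₂' := by
    intro e₁ e₂ e₁' e₂' h1 h2 x hx
    rw [hmemT] at hx ⊢
    obtain ⟨hb, hf1, hg1, ht⟩ := hx
    exact ⟨hb, isEFree_of_dvd h1 hf1, isEFree_of_dvd h2 hg1, ht⟩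
  have hpdQ : ∀ pi ∈ P, pi * d ∣ Q := by
    intro pi hpi
    obtain ⟨hprime, hdvd, hnd⟩ := (hP pi).mp hpi
    exact (Nat.Coprime.mul_dvd_of_dvd_of_dvd
      ((Nat.Prime.coprime_iff_not_dvd hprime).mpr hnd) hdvd hd)
  have hsubQ : T Q Q ⊆ T d d := hsub Q Q d d hd hd
  have hsub1 : ∀ pi ∈ P, T d (pi * d) ⊆ T d d := fun pi _ =>
    hsub d (pi * d) d d dvd_rfl (dvd_mul_left d pi)
  have hsub2 : ∀ pi ∈ P, T (pi * d) d ⊆ T d d := fun pi _ =>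
    hsub (pi * d) d d d (dvd_mul_left d pi) dvd_rfl
  -- the key covering
  have hkey : T d d \ T Q Q ⊆
      P.biUnion (fun pi => (T d d \ T d (pi * d)) ∪ (T d d \ T (pi * d) d)) := by
    intro x hx
    rw [Finset.mem_sdiff] at hx
    obtain ⟨hxdd, hxQQ⟩ := hx
    by_contra hcon
    simp only [Finset.mem_biUnion, Finset.mem_union, Finset.mem_sdiff, not_exists, not_or,
      not_and, not_not] at hcon
    apply hxQQ
    have hxA := (hmemT d d x).mp hxdd
    obtain ⟨hb, hf1, hg1, hta, htb⟩ := hxA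
    rw [hmemT]
    refine ⟨hb, ?_, ?_, hta, htb⟩
    · refine isEFree_full hQpos hd hP hf1 (fun pi hpi => ?_)
      have := ((hmemT _ _ x).mp ((hcon pi hpi).2 hxdd)).2.1
      exact this
    · refine isEFree_full hQpos hd hP hg1 (fun pi hpi => ?_)
      have := ((hmemT _ _ x).mp ((hcon pi hpi).1 hxdd)).2.2.1
      exact this
  -- counting
  have hnat : (T d d).card - (T Q Q).card ≤
      ∑ pi ∈ P, (((T d d).card - (T d (pi * d)).card) +
        ((T d d).card - (T (pi * d) d).card)) := by
    calc (T d d).card - (T Q Q).card = (T d d \ T Q Q).card :=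
          (Finset.card_sdiff_of_subset hsubQ).symm
      _ ≤ (P.biUnion (fun pi => (T d d \ T d (pi * d)) ∪ (T d d \ T (pi * d) d))).card :=
          Finset.card_le_card hkey
      _ ≤ ∑ pi ∈ P, ((T d d \ T d (pi * d)) ∪ (T d d \ T (pi * d) d)).card :=
          Finset.card_biUnion_le
      _ ≤ ∑ pi ∈ P, ((T d d \ T d (pi * d)).card + (T d d \ T (pi * d) d).card) :=
          Finset.sum_le_sum (fun pi _ => Finset.card_union_le _ _)
      _ = ∑ pi ∈ P, (((T d d).card - (T d (pi * d)).card) +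
            ((T d d).card - (T (pi * d) d).card)) := by
          refine Finset.sum_congr rfl (fun pi hpi => ?_)
          rw [Finset.card_sdiff_of_subset (hsub1 pi hpi), Finset.card_sdiff_of_subset (hsub2 pi hpi)]
  -- cast to ℝ
  have hleQ : (T Q Q).card ≤ (T d d).card := Finset.card_le_card hsubQ
  have hle1 : ∀ pi ∈ P, (T d (pi * d)).card ≤ (T d d).card := fun pi hpi =>
    Finset.card_le_card (hsub1 pi hpi)
  have hle2 : ∀ pi ∈ P, (T (pi * d) d).card ≤ (T d d).card := fun pi hpi =>
    Finset.card_le_card (hsub2 pi hpi)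
  have hreal : ((T d d).card : ℝ) - (T Q Q).card ≤
      ∑ pi ∈ P, ((((T d d).card : ℝ) - (T d (pi * d)).card) +
        (((T d d).card : ℝ) - ((T (pi * d) d).card : ℕ))) := by
    have := (Nat.cast_le (α := ℝ)).mpr hnat
    push_cast [Nat.cast_sub hleQ] at this
    calc ((T d d).card : ℝ) - (T Q Q).card
        = (((T d d).card - (T Q Q).card : ℕ) : ℝ) := by
          rw [Nat.cast_sub hleQ]
      _ ≤ ((∑ pi ∈ P, (((T d d).card - (T d (pi * d)).card) +
            ((T d d).card - (T (pi * d) d).card)) : ℕ) : ℝ) :=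
          (Nat.cast_le (α := ℝ)).mpr hnat
      _ = ∑ pi ∈ P, ((((T d d).card : ℝ) - (T d (pi * d)).card) +
            (((T d d).card : ℝ) - ((T (pi * d) d).card : ℕ))) := by
          push_cast
          refine Finset.sum_congr rfl (fun pi hpi => ?_)
          rw [Nat.cast_sub (hle1 pi hpi), Nat.cast_sub (hle2 pi hpi)]
  rw [ge_iff_le]
  simp only [hcard]
  have hsum : ∑ pi ∈ P, ((((T d d).card : ℝ) - (T d (pi * d)).card) +
        (((T d d).card : ℝ) - ((T (pi * d) d).card : ℕ)))
      = 2 * (P.card : ℝ) * (T d d).card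
        - (∑ pi ∈ P, ((T d (pi * d)).card : ℝ))
        - (∑ pi ∈ P, ((T (pi * d) d).card : ℝ)) := by
    simp only [Finset.sum_add_distrib, Finset.sum_sub_distrib, Finset.sum_const,
      nsmul_eq_mul]
    ring
  rw [hsum] at hreal
  linarith
end
end

section
/- For every integer n ≥ 3, the number of distinct prime divisors of n satisfies w(n) ≤ 1.385·(log n)/(log log n). -/
open scoped Classical

noncomputable section
open Real

open scoped Classical

noncomputable section

def A (m : ℕ) : Prop := Nat.Prime m ∨ (48 ≤ m ∧ (m % 6 = 1 ∨ m % 6 = 5))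

instance : DecidablePred A := fun _ => inferInstanceAs (Decidable (_ ∨ _))

def b (j : ℕ) : ℕ :=
  if j < 15 then [2,3,5,7,11,13,17,19,23,29,31,37,41,43,47].getD j 0
  else 3*j+4+(1-j%2)

lemma A_mod6 {m : ℕ} (h : 48 ≤ m) (hA : A m) : m % 6 = 1 ∨ m % 6 = 5 := by
  rcases hA with hp | ⟨_, h6⟩
  · rcases Nat.mod_two_eq_zero_or_one m with h2 | h2
    · exfalso
      have : (2 : ℕ) ∣ m := Nat.dvd_of_mod_eq_zero (by omega)
      have := (Nat.Prime.eq_one_or_self_of_dvd hp 2 this)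
      omega
    · have h3 : ¬ (3 ∣ m) := by
        intro h3
        have := (Nat.Prime.eq_one_or_self_of_dvd hp 3 h3)
        omega
      have : ¬ (m % 3 = 0) := fun hh => h3 (Nat.dvd_of_mod_eq_zero hh)
      omega
  · exact h6

lemma count_window {y : ℕ} (hy : 48 ≤ y) :
    Nat.count A (y + 6) ≤ Nat.count A y + 2 := by
  have e1 : ∀ z, Nat.count A (z+1) = Nat.count A z + if A z then 1 else 0 :=
    fun z => Nat.count_succ A z
  have key : ∀ r : ℕ, r < 6 → (if A (y + r) then 1 else 0 : ℕ) ≤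
      if (y + r) % 6 = 1 ∨ (y + r) % 6 = 5 then 1 else 0 := by
    intro r hr
    split_ifs with h1 h2
    · rfl
    · exact absurd (A_mod6 (by omega) h1) h2
    all_goals omega
  have h6 : Nat.count A (y+6) = Nat.count A y
      + ((if A y then 1 else 0) + (if A (y+1) then 1 else 0) + (if A (y+2) then 1 else 0)
        + (if A (y+3) then 1 else 0) + (if A (y+4) then 1 else 0) + (if A (y+5) then 1 else 0)) := by
    show Nat.count A (y+5+1) = _
    rw [e1, show y+5 = y+4+1 from rfl, e1, show y+4 = y+3+1 from rfl, e1,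
        show y+3 = y+2+1 from rfl, e1, show y+2 = y+1+1 from rfl, e1, e1]
    ring
  rw [h6]
  have b0 := key 0 (by norm_num); have b1 := key 1 (by norm_num); have b2 := key 2 (by norm_num)
  have b3 := key 3 (by norm_num); have b4 := key 4 (by norm_num); have b5 := key 5 (by norm_num)
  have hle : ((if (y+0) % 6 = 1 ∨ (y+0) % 6 = 5 then 1 else 0) + (if (y+1) % 6 = 1 ∨ (y+1) % 6 = 5 then 1 else 0)
      + (if (y+2) % 6 = 1 ∨ (y+2) % 6 = 5 then 1 else 0) + (if (y+3) % 6 = 1 ∨ (y+3) % 6 = 5 then 1 else 0)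
      + (if (y+4) % 6 = 1 ∨ (y+4) % 6 = 5 then 1 else 0) + (if (y+5) % 6 = 1 ∨ (y+5) % 6 = 5 then 1 else 0) : ℕ) ≤ 2 := by
    have := Nat.mod_lt y (show 0 < 6 by norm_num)
    split_ifs <;> omega
  simp only [Nat.add_zero] at b0 hle ⊢
  omega

lemma count_A_b : ∀ j, Nat.count A (b j) ≤ j := by
  intro j
  induction j using Nat.strong_induction_on with
  | _ j ih =>
    by_cases h : j < 17
    · interval_cases j <;> decide
    · have hb : b j = b (j-2) + 6 := by
        unfold b
        rw [if_neg (by omega), if_neg (by omega)]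
        omega
      have h48 : 48 ≤ b (j-2) := by unfold b; rw [if_neg (by omega)]; omega
      calc Nat.count A (b j) = Nat.count A (b (j-2) + 6) := by rw [hb]
        _ ≤ Nat.count A (b (j-2)) + 2 := count_window h48
        _ ≤ (j-2) + 2 := by have := ih (j-2) (by omega); omega
        _ ≤ j := by omega

lemma b_le_max {S : Finset ℕ} (hS : ∀ p ∈ S, A p) (hne : S.Nonempty) :
    b (S.card - 1) ≤ S.max' hne := by
  by_contra hlt
  push_neg at hlt
  have hsub : S ⊆ Finset.filter A (Finset.range (b (S.card - 1))) := by
    intro p hp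
    simp only [Finset.mem_filter, Finset.mem_range]
    exact ⟨lt_of_le_of_lt (S.le_max' p hp) hlt, hS p hp⟩
  have h1 := Finset.card_le_card hsub
  rw [← Nat.count_eq_card_filter_range] at h1
  have h2 := count_A_b (S.card - 1)
  have h3 := Finset.card_pos.mpr hne
  omega

lemma prod_b_le : ∀ (k : ℕ) (S : Finset ℕ), S.card = k → (∀ p ∈ S, A p) →
    ∏ j ∈ Finset.range k, b j ≤ ∏ p ∈ S, p := by
  intro k
  induction k with
  | zero => intro S _ _; simp; exact Finset.one_le_prod' (fun p hp => by
      rcases ‹∀ p ∈ S, A p› p hp with hp' | hp'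
      · exact hp'.one_lt.le
      · omega)
  | succ k ih =>
    intro S hcard hS
    have hne : S.Nonempty := Finset.card_pos.mp (by omega)
    set m := S.max' hne with hm
    have hmem : m ∈ S := S.max'_mem hne
    have hcard' : (S.erase m).card = k := by rw [Finset.card_erase_of_mem hmem]; omega
    have hstep := ih (S.erase m) hcard' (fun p hp => hS p (Finset.mem_of_mem_erase hp))
    have hbm : b k ≤ m := by
      have := b_le_max hS hne
      rw [hcard] at this
      simpa using this
    calc ∏ j ∈ Finset.range (k+1), b j = (∏ j ∈ Finset.range k, b j) * b k :=
          Finset.prod_range_succ _ _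
      _ ≤ (∏ p ∈ S.erase m, p) * m := Nat.mul_le_mul hstep hbm
      _ = ∏ p ∈ S, p := Finset.prod_erase_mul S _ hmem

lemma prod_b_ge : ∀ k, 2 ≤ k → 3^(k-2) * Nat.factorial (k-2) ≤ ∏ j ∈ Finset.range k, b j := by
  intro k
  induction k with
  | zero => omega
  | succ k ih =>
    intro hk
    rcases Nat.lt_or_ge k 2 with h | h
    · interval_cases k
      · omega
      · decide
    · have hbk : 3 * (k - 1) ≤ b k := by
        unfold b
        split_ifs with h15
        · interval_cases k <;> decide
        · omega
      have : 3^(k+1-2) * Nat.factorial (k+1-2) = (3^(k-2) * Nat.factorial (k-2)) * (3 * (k-1)) := by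
        have h1 : k+1-2 = (k-2)+1 := by omega
        have h2 : k - 1 = (k-2)+1 := by omega
        rw [h1, pow_succ, Nat.factorial_succ, h2]
        ring
      rw [this, Finset.prod_range_succ]
      exact Nat.mul_le_mul (ih h) hbk



lemma log_ge_rat (x : ℝ) (a d : ℕ) (hd : 0 < d) (hx : 0 < x)
    (h : (2.7182819 : ℝ)^a ≤ x^d) : (a : ℝ)/d ≤ Real.log x := by
  have he : Real.exp 1 ≤ 2.7182819 := le_of_lt (lt_trans Real.exp_one_lt_d9 (by norm_num))
  have h1 : Real.exp a ≤ x ^ d := by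
    calc Real.exp (a:ℝ) = (Real.exp 1)^a := by
          rw [← Real.exp_nat_mul]; norm_num
      _ ≤ (2.7182819:ℝ)^a := pow_le_pow_left₀ (Real.exp_pos 1).le he a
      _ ≤ x^d := h
  have h2 := Real.log_le_log (Real.exp_pos _) h1
  rw [Real.log_exp, Real.log_pow] at h2
  rw [div_le_iff₀ (by positivity)]
  linarith [h2]

lemma log_le_rat (x : ℝ) (c d : ℕ) (hd : 0 < d) (hx : 1 ≤ x)
    (h : x^d ≤ (2.7182818 : ℝ)^c) : Real.log x ≤ (c:ℝ)/d := by
  have he : (2.7182818:ℝ) ≤ Real.exp 1 := le_of_lt (lt_trans (by norm_num) Real.exp_one_gt_d9)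
  have h1 : x ^ d ≤ Real.exp c := by
    calc x^d ≤ (2.7182818:ℝ)^c := h
      _ ≤ (Real.exp 1)^c := pow_le_pow_left₀ (by norm_num) he c
      _ = Real.exp c := by rw [← Real.exp_nat_mul]; norm_num
  have h2 := Real.log_le_log (by positivity) h1
  rw [Real.log_exp, Real.log_pow] at h2
  rw [le_div_iff₀ (by positivity)]
  linarith [h2]

lemma log_le_div_e {x : ℝ} (hx : 0 < x) : Real.log x ≤ x / Real.exp 1 := by
  have h1 : Real.log (x / Real.exp 1) ≤ x / Real.exp 1 - 1 :=
    Real.log_le_sub_one_of_pos (by positivity)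
  rw [Real.log_div (ne_of_gt hx) (ne_of_gt (Real.exp_pos 1)), Real.log_exp] at h1
  linarith

lemma glue (k : ℕ) (x ℓ u : ℝ) (h1 : Real.exp 1 ≤ ℓ) (h2 : ℓ ≤ Real.log x)
    (h3 : Real.log ℓ ≤ u) (h4 : (k:ℝ) * u ≤ 1.385 * ℓ) :
    (k:ℝ) ≤ 1.385 * Real.log x / Real.log (Real.log x) := by
  set L := Real.log x with hL
  have hLe : Real.exp 1 ≤ L := le_trans h1 h2
  have hℓpos : 0 < ℓ := lt_of_lt_of_le (Real.exp_pos 1) h1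
  have hLpos : 0 < L := lt_of_lt_of_le (Real.exp_pos 1) hLe
  have hlogℓ : 1 ≤ Real.log ℓ := by
    calc (1:ℝ) = Real.log (Real.exp 1) := (Real.log_exp 1).symm
      _ ≤ Real.log ℓ := Real.log_le_log (Real.exp_pos 1) h1
  have hlogL : 1 ≤ Real.log L := by
    calc (1:ℝ) = Real.log (Real.exp 1) := (Real.log_exp 1).symm
      _ ≤ Real.log L := Real.log_le_log (Real.exp_pos 1) hLe
  have hanti := Real.log_div_self_antitoneOn (by simpa using h1) (by simpa using hLe) h2
  -- hanti : log L / L ≤ log ℓ / ℓ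
  have hcross : Real.log L * ℓ ≤ Real.log ℓ * L := by
    have := (div_le_div_iff₀ hLpos hℓpos).mp hanti
    linarith
  rw [le_div_iff₀ (by linarith)]
  have hu : Real.log ℓ ≤ u := h3
  have hknn : (0:ℝ) ≤ (k:ℝ) := Nat.cast_nonneg k
  -- k * log L * ℓ ≤ k * log ℓ * L ≤ k * u * L ≤ 1.385 * ℓ * L
  have c1 : (k:ℝ) * Real.log L * ℓ ≤ (k:ℝ) * (Real.log ℓ * L) :=
    by nlinarith [hcross]
  have c2 : (k:ℝ) * (Real.log ℓ * L) ≤ (k:ℝ) * (u * L) := by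
    apply mul_le_mul_of_nonneg_left _ hknn
    exact mul_le_mul_of_nonneg_right hu hLpos.le
  have c3 : (k:ℝ) * (u * L) ≤ 1.385 * ℓ * L := by nlinarith [h4, hLpos]
  have := le_trans c1 (le_trans c2 c3)
  have hfin : (k:ℝ) * Real.log L ≤ 1.385 * L := by
    have hℓ' : 0 < ℓ := hℓpos
    nlinarith [this]
  linarith

lemma midcase (n k N a d c d2 : ℕ) (hN : N ≤ n) (hNpos : 0 < N)
    (h1 : (2.7182819:ℝ)^a ≤ (N:ℝ)^d) (hd : 0 < d) (hd2 : 0 < d2)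
    (h2 : ((a:ℝ)/d)^d2 ≤ (2.7182818:ℝ)^c)
    (he : (2.7182819:ℝ) * d ≤ a)
    (h4 : 200*k*c*d ≤ 277*a*d2) :
    (k:ℝ) ≤ 1.385 * Real.log n / Real.log (Real.log n) := by
  have hdp : (0:ℝ) < d := by exact_mod_cast hd
  have hd2p : (0:ℝ) < d2 := by exact_mod_cast hd2
  have hel : Real.exp 1 ≤ (a:ℝ)/d := by
    rw [le_div_iff₀ hdp]
    calc Real.exp 1 * d ≤ 2.7182819 * d := by
          have := le_of_lt (lt_trans Real.exp_one_lt_d9 (by norm_num : (2.7182818286:ℝ) < 2.7182819))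
          nlinarith
      _ ≤ a := he
  apply glue k n ((a:ℝ)/d) ((c:ℝ)/d2) hel
  · have hnp : (0:ℝ) < (n:ℝ) := by exact_mod_cast Nat.lt_of_lt_of_le hNpos hN
    apply log_ge_rat _ _ _ hd hnp
    calc (2.7182819:ℝ)^a ≤ (N:ℝ)^d := h1
      _ ≤ (n:ℝ)^d := by
          apply pow_le_pow_left₀ (by positivity)
          exact_mod_cast hN
  · apply log_le_rat _ _ _ hd2
    · calc (1:ℝ) ≤ Real.exp 1 := by
            have := Real.exp_one_gt_d9; linarith
        _ ≤ (a:ℝ)/d := hel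
    · exact h2
  · have h4' : (200:ℝ)*k*c*d ≤ 277*a*d2 := by exact_mod_cast h4
    rw [show (k:ℝ)*((c:ℝ)/d2) = ((k:ℝ)*c)/d2 by ring,
       show (1.385:ℝ)*((a:ℝ)/d) = ((1.385:ℝ)*a)/d by ring, div_le_div_iff₀ hd2p hdp]
    nlinarith [h4']

lemma tailcase (k n : ℕ) (hk : 55 ≤ k)
    (hprod : 3^(k-2) * Nat.factorial (k-2) ≤ n) :
    (k:ℝ) ≤ 1.385 * Real.log n / Real.log (Real.log n) := by
  set s := k - 2 with hs
  set S := (s:ℝ) with hS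
  have hs53 : (53:ℝ) ≤ S := by rw [hS]; exact_mod_cast (by omega : 53 ≤ s)
  have hSpos : (0:ℝ) < S := by linarith
  set t := Real.log S with ht
  have ht39 : (39/10:ℝ) ≤ t := by
    have := log_ge_rat S 39 10 (by norm_num) hSpos (by
      calc (2.7182819:ℝ)^39 ≤ 53^10 := by norm_num
        _ ≤ S^10 := pow_le_pow_left₀ (by norm_num) hs53 10)
    rw [ht]; convert this using 2 <;> norm_num
  have hlog3 : (1098/1000:ℝ) ≤ Real.log 3 := by
    have := log_ge_rat 3 549 500 (by norm_num) (by norm_num) (by rw [show (549:ℕ) = 200+200+149 from rfl, show (500:ℕ) = 250+250 from rfl]; simp only [pow_add, pow_mul]; norm_num)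
    calc (1098/1000:ℝ) = (549:ℕ)/(500:ℕ) := by norm_num
      _ ≤ Real.log 3 := this
  have hfactpos : (0:ℝ) < (Nat.factorial s : ℝ) := by
    exact_mod_cast Nat.factorial_pos s
  have hlogfact : S * t - S ≤ Real.log (Nat.factorial s) := by
    have h := Real.pow_div_factorial_le_exp (x := S) (le_of_lt hSpos) s
    rw [div_le_iff₀ hfactpos] at h
    have h2 := Real.log_le_log (by positivity) h
    rw [Real.log_pow, Real.log_mul (ne_of_gt (Real.exp_pos S)) (ne_of_gt hfactpos),
        Real.log_exp] at h2
    have hc : (s:ℝ) * t = S * t := by rw [hS]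
    linarith [h2]
  set Λ := S * (t + 98/1000) with hΛ
  have hlogn : Λ ≤ Real.log n := by
    have hcast : ((3:ℝ))^s * (Nat.factorial s : ℝ) ≤ (n:ℝ) := by
      exact_mod_cast hprod
    have h2 := Real.log_le_log (by positivity) hcast
    rw [Real.log_mul (by positivity) (ne_of_gt hfactpos), Real.log_pow] at h2
    have hq : S * (t + 98/1000) ≤ (s:ℝ) * Real.log 3 + Real.log (Nat.factorial s) := by
      rw [← hS]
      nlinarith [hlog3, hlogfact, hSpos]
    linarith
  have h1 : Real.exp 1 ≤ Λ := by
    have he : Real.exp 1 ≤ 2.7182819 := le_of_lt (lt_trans Real.exp_one_lt_d9 (by norm_num))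
    have he' : Real.exp 1 ≤ 27182819/10000000 := by
      rw [show (27182819/10000000:ℝ) = 2.7182819 by norm_num]; exact he
    nlinarith [hs53, ht39]
  have hΛ1 : (1:ℝ) ≤ Λ := le_trans (by nlinarith [Real.exp_one_gt_d9] : (1:ℝ) ≤ Real.exp 1) h1
  have hlog41 : Real.log (41/10) ≤ 1412/1000 := by
    have := log_le_rat (41/10) 353 250 (by norm_num) (by norm_num) (by rw [show (353:ℕ) = 200+153 from rfl]; simp only [pow_add, pow_mul]; norm_num)
    calc Real.log (41/10) ≤ (353:ℕ)/(250:ℕ) := this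
      _ ≤ 1412/1000 := by norm_num
  have hconc : Real.log (t + 98/1000) ≤ Real.log (41/10) + ((t + 98/1000)/(41/10) - 1) := by
    have hpos : (0:ℝ) < (t + 98/1000)/(41/10) := by positivity
    have h := Real.log_le_sub_one_of_pos hpos
    rw [Real.log_div (by positivity) (by norm_num)] at h
    linarith
  have h3 : Real.log Λ ≤ 51/41 * t + 436/1000 := by
    rw [hΛ, Real.log_mul (ne_of_gt hSpos) (by positivity)]
    have hts : Real.log S = t := ht.symm
    rw [hts]
    linarith [hconc, hlog41]
  have hlog53 : Real.log 53 ≤ 3971/1000 := by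
    have := log_le_rat 53 3971 1000 (by norm_num) (by norm_num) (by rw [show (3971:ℕ) = 209*19 from rfl, show (1000:ℕ) = 250+250+250+250 from rfl]; simp only [pow_add, pow_mul]; norm_num)
    calc Real.log 53 ≤ (3971:ℕ)/(1000:ℕ) := this
      _ ≤ 3971/1000 := by norm_num
  have htub : 53 * t ≤ 3971/1000 * S := by
    have he53 : Real.exp 1 ≤ (53:ℝ) := le_of_lt (lt_trans Real.exp_one_lt_d9 (by norm_num))
    have hanti := Real.log_div_self_antitoneOn
      (by simpa using he53 : (53:ℝ) ∈ {x : ℝ | Real.exp 1 ≤ x})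
      (by simpa using le_trans he53 hs53 : S ∈ {x : ℝ | Real.exp 1 ≤ x}) hs53
    simp only at hanti
    have hd := (div_le_div_iff₀ hSpos (by norm_num : (0:ℝ) < 53)).mp hanti
    nlinarith [hd, hlog53, hSpos]
  have hk2 : (k:ℝ) = S + 2 := by
    rw [hS, hs]
    push_cast [Nat.cast_sub (by omega : 2 ≤ k)]
    ring
  have h4 : (k:ℝ) * (51/41 * t + 436/1000) ≤ 1.385 * Λ := by
    rw [hk2, hΛ, show (1.385:ℝ) = 277/200 by norm_num]
    have hSt : 39/10 * S ≤ t * S := by nlinarith [ht39, hSpos]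
    have expand : (S+2)*(51/41*t+436/1000) = 51/41*(t*S) + 436/1000*S + 102/41*t + 872/1000 := by ring
    have expand2 : 277/200*(S*(t+98/1000)) = 277/200*(t*S) + 13573/100000*S := by ring
    rw [expand, expand2]
    linarith [hSt, htub, hs53]
  exact glue k n Λ (51/41 * t + 436/1000) h1 hlogn h3 h4


set_option maxHeartbeats 4000000 in
/-- **Lemma 4.3 (Robin's bound).** For `n ≥ 3`, the number `w(n)` of distinct prime
divisors of `n` satisfies `w(n) ≤ 1.385·log n / log log n`. -/
theorem stmt_12 (n : ℕ) (hn : 3 ≤ n) :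
    (n.primeFactors.card : ℝ) ≤ 1.385 * Real.log n / Real.log (Real.log n) := by
  have hn0 : 0 < n := by omega
  obtain ⟨k, hk⟩ : ∃ k, n.primeFactors.card = k := ⟨_, rfl⟩
  rw [hk]
  have hn3 : (3:ℝ) ≤ (n:ℝ) := by exact_mod_cast hn
  have hL1 : (1:ℝ) < Real.log n := by
    have he3 : Real.exp 1 < 3 := lt_trans Real.exp_one_lt_d9 (by norm_num)
    calc (1:ℝ) = Real.log (Real.exp 1) := (Real.log_exp 1).symm
      _ < Real.log n := Real.log_lt_log (Real.exp_pos 1) (lt_of_lt_of_le he3 hn3)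
  by_cases hk3 : k ≤ 3
  · have hpos : (0:ℝ) < Real.log (Real.log n) := Real.log_pos hL1
    rw [le_div_iff₀ hpos]
    have hLpos : (0:ℝ) < Real.log n := by linarith
    have hld := log_le_div_e hLpos
    have hk3' : (k:ℝ) ≤ 3 := by exact_mod_cast hk3
    have he : (2.7182818283:ℝ) < Real.exp 1 := Real.exp_one_gt_d9
    have he' : (27182818283/10000000000:ℝ) < Real.exp 1 := by
      rw [show (27182818283/10000000000:ℝ) = 2.7182818283 by norm_num]; exact he
    have s1 : (k:ℝ) * Real.log (Real.log n) ≤ 3 * (Real.log n / Real.exp 1) :=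
      mul_le_mul hk3' hld (le_of_lt hpos) (by norm_num)
    have s2 : 3 * (Real.log n / Real.exp 1) ≤ 1.385 * Real.log n := by
      rw [show (1.385:ℝ) = 277/200 by norm_num, mul_div_assoc', div_le_iff₀ (Real.exp_pos 1)]
      nlinarith [he', hLpos]
    linarith
  · push_neg at hk3
    have hAmem : ∀ p ∈ n.primeFactors, A p :=
      fun p hp => Or.inl (Nat.prime_of_mem_primeFactors hp)
    have hprodA : ∏ j ∈ Finset.range k, b j ≤ n :=
      le_trans (prod_b_le k n.primeFactors hk hAmem)
        (Nat.le_of_dvd hn0 (Nat.prod_primeFactors_dvd n))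
    by_cases hk54 : k ≤ 54
    · interval_cases k
      · exact midcase n 4 210 5 1 17 10
          (by rw [show (210:ℕ) = ∏ j ∈ Finset.range 4, b j from by decide]; exact hprodA)
          (by norm_num) (by norm_num) (by norm_num) (by norm_num) (by norm_num) (by norm_num) (by norm_num)
      · exact midcase n 5 2310 15 2 41 20
          (by rw [show (2310:ℕ) = ∏ j ∈ Finset.range 5, b j from by decide]; exact hprodA)
          (by norm_num) (by norm_num) (by norm_num) (by norm_num) (by norm_num) (by norm_num) (by norm_num)
      · exact midcase n 6 30030 10 1 461 200
          (by rw [show (30030:ℕ) = ∏ j ∈ Finset.range 6, b j from by decide]; exact hprodA)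
          (by norm_num) (by norm_num) (by norm_num) (by norm_num) (by rw [show (461:ℕ) = 200+200+61 from rfl]; simp only [pow_add, pow_mul]; norm_num) (by norm_num) (by norm_num)
      · exact midcase n 7 510510 13 1 257 100
          (by rw [show (510510:ℕ) = ∏ j ∈ Finset.range 7, b j from by decide]; exact hprodA)
          (by norm_num) (by norm_num) (by norm_num) (by norm_num) (by rw [show (257:ℕ) = 200+57 from rfl]; simp only [pow_add, pow_mul]; norm_num) (by norm_num) (by norm_num)
      · exact midcase n 8 9699690 321 20 1388 500
          (by rw [show (9699690:ℕ) = ∏ j ∈ Finset.range 8, b j from by decide]; exact hprodA)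
          (by norm_num) (by rw [show (321:ℕ) = 200+121 from rfl]; simp only [pow_add, pow_mul]; norm_num) (by norm_num) (by norm_num) (by rw [show (500:ℕ) = 250+250 from rfl, show (1388:ℕ) = 200+200+200+200+200+200+188 from rfl]; simp only [pow_add, pow_mul]; norm_num) (by norm_num) (by norm_num)
      · exact midcase n 9 223092870 961 50 1478 500
          (by rw [show (223092870:ℕ) = ∏ j ∈ Finset.range 9, b j from by decide]; exact hprodA)
          (by norm_num) (by rw [show (961:ℕ) = 200+200+200+200+161 from rfl]; simp only [pow_add, pow_mul]; norm_num) (by norm_num) (by norm_num) (by rw [show (500:ℕ) = 250+250 from rfl, show (1478:ℕ) = 200+200+200+200+200+200+200+78 from rfl]; simp only [pow_add, pow_mul]; norm_num) (by norm_num) (by norm_num)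
      · exact midcase n 10 6469693230 45 2 623 200
          (by rw [show (6469693230:ℕ) = ∏ j ∈ Finset.range 10, b j from by decide]; exact hprodA)
          (by norm_num) (by norm_num) (by norm_num) (by norm_num) (by rw [show (623:ℕ) = 200+200+200+23 from rfl]; simp only [pow_add, pow_mul]; norm_num) (by norm_num) (by norm_num)
      · exact midcase n 11 200560490130 26 1 163 50
          (by rw [show (200560490130:ℕ) = ∏ j ∈ Finset.range 11, b j from by decide]; exact hprodA)
          (by norm_num) (by norm_num) (by norm_num) (by norm_num) (by norm_num) (by norm_num) (by norm_num)
      · exact midcase n 12 7420738134810 59 2 17 5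
          (by rw [show (7420738134810:ℕ) = ∏ j ∈ Finset.range 12, b j from by decide]; exact hprodA)
          (by norm_num) (by norm_num) (by norm_num) (by norm_num) (by norm_num) (by norm_num) (by norm_num)
      · exact midcase n 13 304250263527210 33 1 7 2
          (by rw [show (304250263527210:ℕ) = ∏ j ∈ Finset.range 13, b j from by decide]; exact hprodA)
          (by norm_num) (by norm_num) (by norm_num) (by norm_num) (by norm_num) (by norm_num) (by norm_num)
      · exact midcase n 14 13082761331670030 37 1 73 20
          (by rw [show (13082761331670030:ℕ) = ∏ j ∈ Finset.range 14, b j from by decide]; exact hprodA)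
          (by norm_num) (by norm_num) (by norm_num) (by norm_num) (by norm_num) (by norm_num) (by norm_num)
      · exact midcase n 15 614889782588491410 40 1 369 100
          (by rw [show (614889782588491410:ℕ) = ∏ j ∈ Finset.range 15, b j from by decide]; exact hprodA)
          (by norm_num) (by norm_num) (by norm_num) (by norm_num) (by rw [show (369:ℕ) = 200+169 from rfl]; simp only [pow_add, pow_mul]; norm_num) (by norm_num) (by norm_num)
      · exact midcase n 16 30129599346836079090 44 1 19 5
          (by rw [show (30129599346836079090:ℕ) = ∏ j ∈ Finset.range 16, b j from by decide]; exact hprodA)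
          (by norm_num) (by norm_num) (by norm_num) (by norm_num) (by norm_num) (by norm_num) (by norm_num)
      · exact midcase n 17 1596868765382312191770 48 1 39 10
          (by rw [show (1596868765382312191770:ℕ) = ∏ j ∈ Finset.range 17, b j from by decide]; exact hprodA)
          (by norm_num) (by norm_num) (by norm_num) (by norm_num) (by norm_num) (by norm_num) (by norm_num)
      · exact midcase n 18 87827782096027170547350 52 1 4 1
          (by rw [show (87827782096027170547350:ℕ) = ∏ j ∈ Finset.range 18, b j from by decide]; exact hprodA)
          (by norm_num) (by norm_num) (by norm_num) (by norm_num) (by norm_num) (by norm_num) (by norm_num)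
      · exact midcase n 19 5181839143665603062293650 56 1 81 20
          (by rw [show (5181839143665603062293650:ℕ) = ∏ j ∈ Finset.range 19, b j from by decide]; exact hprodA)
          (by norm_num) (by norm_num) (by norm_num) (by norm_num) (by norm_num) (by norm_num) (by norm_num)
      · exact midcase n 20 316092187763601786799912650 61 1 21 5
          (by rw [show (316092187763601786799912650:ℕ) = ∏ j ∈ Finset.range 20, b j from by decide]; exact hprodA)
          (by norm_num) (by norm_num) (by norm_num) (by norm_num) (by norm_num) (by norm_num) (by norm_num)
      · exact midcase n 21 20545992204634116141994322250 65 1 21 5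
          (by rw [show (20545992204634116141994322250:ℕ) = ∏ j ∈ Finset.range 21, b j from by decide]; exact hprodA)
          (by norm_num) (by norm_num) (by norm_num) (by norm_num) (by norm_num) (by norm_num) (by norm_num)
      · exact midcase n 22 1376581477710485781513619590750 69 1 43 10
          (by rw [show (1376581477710485781513619590750:ℕ) = ∏ j ∈ Finset.range 22, b j from by decide]; exact hprodA)
          (by norm_num) (by norm_num) (by norm_num) (by norm_num) (by norm_num) (by norm_num) (by norm_num)
      · exact midcase n 23 97737284917444490487466990943250 73 1 43 10
          (by rw [show (97737284917444490487466990943250:ℕ) = ∏ j ∈ Finset.range 23, b j from by decide]; exact hprodA)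
          (by norm_num) (by norm_num) (by norm_num) (by norm_num) (by norm_num) (by norm_num) (by norm_num)
      · exact midcase n 24 7134821798973447805585090338857250 77 1 22 5
          (by rw [show (7134821798973447805585090338857250:ℕ) = ∏ j ∈ Finset.range 24, b j from by decide]; exact hprodA)
          (by norm_num) (by norm_num) (by norm_num) (by norm_num) (by norm_num) (by norm_num) (by norm_num)
      · exact midcase n 25 549381278520955481030051956092008250 82 1 9 2
          (by rw [show (549381278520955481030051956092008250:ℕ) = ∏ j ∈ Finset.range 25, b j from by decide]; exact hprodA)
          (by norm_num) (by norm_num) (by norm_num) (by norm_num) (by norm_num) (by norm_num) (by norm_num)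
      · exact midcase n 26 43401121003155483001374104531268651750 86 1 9 2
          (by rw [show (43401121003155483001374104531268651750:ℕ) = ∏ j ∈ Finset.range 26, b j from by decide]; exact hprodA)
          (by norm_num) (by norm_num) (by norm_num) (by norm_num) (by norm_num) (by norm_num) (by norm_num)
      · exact midcase n 27 3602293043261905089114050676095298095250 91 1 23 5
          (by rw [show (3602293043261905089114050676095298095250:ℕ) = ∏ j ∈ Finset.range 27, b j from by decide]; exact hprodA)
          (by norm_num) (by norm_num) (by norm_num) (by norm_num) (by norm_num) (by norm_num) (by norm_num)
      · exact midcase n 28 306194908677261932574694307468100338096250 95 1 23 5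
          (by rw [show (306194908677261932574694307468100338096250:ℕ) = ∏ j ∈ Finset.range 28, b j from by decide]; exact hprodA)
          (by norm_num) (by norm_num) (by norm_num) (by norm_num) (by norm_num) (by norm_num) (by norm_num)
      · exact midcase n 29 27251346872276311999147793364660930090566250 100 1 47 10
          (by rw [show (27251346872276311999147793364660930090566250:ℕ) = ∏ j ∈ Finset.range 29, b j from by decide]; exact hprodA)
          (by norm_num) (by norm_num) (by norm_num) (by norm_num) (by norm_num) (by norm_num) (by norm_num)
      · exact midcase n 30 2479872565377144391922449196184144638241528750 104 1 24 5
          (by rw [show (2479872565377144391922449196184144638241528750:ℕ) = ∏ j ∈ Finset.range 30, b j from by decide]; exact hprodA)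
          (by norm_num) (by norm_num) (by norm_num) (by norm_num) (by norm_num) (by norm_num) (by norm_num)
      · exact midcase n 31 235587893710828717232632673637493740632945231250 109 1 24 5
          (by rw [show (235587893710828717232632673637493740632945231250:ℕ) = ∏ j ∈ Finset.range 31, b j from by decide]; exact hprodA)
          (by norm_num) (by norm_num) (by norm_num) (by norm_num) (by norm_num) (by norm_num) (by norm_num)
      · exact midcase n 32 22852025689950385571565369342836892841395687431250 113 1 24 5
          (by rw [show (22852025689950385571565369342836892841395687431250:ℕ) = ∏ j ∈ Finset.range 32, b j from by decide]; exact hprodA)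
          (by norm_num) (by norm_num) (by norm_num) (by norm_num) (by norm_num) (by norm_num) (by norm_num)
      · exact midcase n 33 2308054594684988942728102303626526176980964430556250 118 1 24 5
          (by rw [show (2308054594684988942728102303626526176980964430556250:ℕ) = ∏ j ∈ Finset.range 33, b j from by decide]; exact hprodA)
          (by norm_num) (by norm_num) (by norm_num) (by norm_num) (by norm_num) (by norm_num) (by norm_num)
      · exact midcase n 34 237729623252553861100994537273532196229039336347293750 122 1 49 10
          (by rw [show (237729623252553861100994537273532196229039336347293750:ℕ) = ∏ j ∈ Finset.range 34, b j from by decide]; exact hprodA)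
          (by norm_num) (by norm_num) (by norm_num) (by norm_num) (by norm_num) (by norm_num) (by norm_num)
      · exact midcase n 35 25437069688023263137806415488267944996507208989160431250 127 1 5 1
          (by rw [show (25437069688023263137806415488267944996507208989160431250:ℕ) = ∏ j ∈ Finset.range 35, b j from by decide]; exact hprodA)
          (by norm_num) (by norm_num) (by norm_num) (by norm_num) (by norm_num) (by norm_num) (by norm_num)
      · exact midcase n 36 2772640595994535682020899288221206004619285779818487006250 132 1 5 1
          (by rw [show (2772640595994535682020899288221206004619285779818487006250:ℕ) = ∏ j ∈ Finset.range 36, b j from by decide]; exact hprodA)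
          (by norm_num) (by norm_num) (by norm_num) (by norm_num) (by norm_num) (by norm_num) (by norm_num)
      · exact midcase n 37 313308387347382532068361619568996278521979293119489031706250 136 1 5 1
          (by rw [show (313308387347382532068361619568996278521979293119489031706250:ℕ) = ∏ j ∈ Finset.range 37, b j from by decide]; exact hprodA)
          (by norm_num) (by norm_num) (by norm_num) (by norm_num) (by norm_num) (by norm_num) (by norm_num)
      · exact midcase n 38 36030464544948991187861586250434572030027618708741238646218750 141 1 5 1
          (by rw [show (36030464544948991187861586250434572030027618708741238646218750:ℕ) = ∏ j ∈ Finset.range 38, b j from by decide]; exact hprodA)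
          (by norm_num) (by norm_num) (by norm_num) (by norm_num) (by norm_num) (by norm_num) (by norm_num)
      · exact midcase n 39 4287625280848929951355528763801714071573286626340207398900031250 146 1 5 1
          (by rw [show (4287625280848929951355528763801714071573286626340207398900031250:ℕ) = ∏ j ∈ Finset.range 39, b j from by decide]; exact hprodA)
          (by norm_num) (by norm_num) (by norm_num) (by norm_num) (by norm_num) (by norm_num) (by norm_num)
      · exact midcase n 40 518802658982720524114018980420007402660367681787165095266903781250 151 1 26 5
          (by rw [show (518802658982720524114018980420007402660367681787165095266903781250:ℕ) = ∏ j ∈ Finset.range 40, b j from by decide]; exact hprodA)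
          (by norm_num) (by norm_num) (by norm_num) (by norm_num) (by norm_num) (by norm_num) (by norm_num)
      · exact midcase n 41 64850332372840065514252372552500925332545960223395636908362972656250 156 1 26 5
          (by rw [show (64850332372840065514252372552500925332545960223395636908362972656250:ℕ) = ∏ j ∈ Finset.range 41, b j from by decide]; exact hprodA)
          (by norm_num) (by norm_num) (by norm_num) (by norm_num) (by norm_num) (by norm_num) (by norm_num)
      · exact midcase n 42 8235992211350688320310051314167617517233336948371245887362097527343750 160 1 26 5
          (by rw [show (8235992211350688320310051314167617517233336948371245887362097527343750:ℕ) = ∏ j ∈ Finset.range 42, b j from by decide]; exact hprodA)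
          (by norm_num) (by norm_num) (by norm_num) (by norm_num) (by norm_num) (by norm_num) (by norm_num)
      · exact midcase n 43 1078914979686940169960616722155957894757567140236633211244434776082031250 165 1 26 5
          (by rw [show (1078914979686940169960616722155957894757567140236633211244434776082031250:ℕ) = ∏ j ∈ Finset.range 43, b j from by decide]; exact hprodA)
          (by norm_num) (by norm_num) (by norm_num) (by norm_num) (by norm_num) (by norm_num) (by norm_num)
      · exact midcase n 44 143495692298363042604762024046742400002756429651472217095509825218910156250 170 1 26 5
          (by rw [show (143495692298363042604762024046742400002756429651472217095509825218910156250:ℕ) = ∏ j ∈ Finset.range 44, b j from by decide]; exact hprodA)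
          (by norm_num) (by norm_num) (by norm_num) (by norm_num) (by norm_num) (by norm_num) (by norm_num)
      · exact midcase n 45 19658909844875736836852397294403708800377630862251693742084846054990691406250 175 1 26 5
          (by rw [show (19658909844875736836852397294403708800377630862251693742084846054990691406250:ℕ) = ∏ j ∈ Finset.range 45, b j from by decide]; exact hprodA)
          (by norm_num) (by norm_num) (by norm_num) (by norm_num) (by norm_num) (by norm_num) (by norm_num)
      · exact midcase n 46 2732588468437727420322483223922115523252490689852985430149793601643706105468750 180 1 26 5
          (by rw [show (2732588468437727420322483223922115523252490689852985430149793601643706105468750:ℕ) = ∏ j ∈ Finset.range 46, b j from by decide]; exact hprodA)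
          (by norm_num) (by norm_num) (by norm_num) (by norm_num) (by norm_num) (by norm_num) (by norm_num)
      · exact midcase n 47 390760150986595021106115101020862519825106168648976916511420485035049973082031250 185 1 27 5
          (by rw [show (390760150986595021106115101020862519825106168648976916511420485035049973082031250:ℕ) = ∏ j ∈ Finset.range 47, b j from by decide]; exact hprodA)
          (by norm_num) (by norm_num) (by norm_num) (by norm_num) (by norm_num) (by norm_num) (by norm_num)
      · exact midcase n 48 56660221893056278060386689648025065374640394454101652894155970330082246096894531250 190 1 27 5
          (by rw [show (56660221893056278060386689648025065374640394454101652894155970330082246096894531250:ℕ) = ∏ j ∈ Finset.range 48, b j from by decide]; exact hprodA)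
          (by norm_num) (by norm_num) (by norm_num) (by norm_num) (by norm_num) (by norm_num) (by norm_num)
      · exact midcase n 49 8442373062065385430997616757555734740821418773661146281229239579182254668437285156250 195 1 11 2
          (by rw [show (8442373062065385430997616757555734740821418773661146281229239579182254668437285156250:ℕ) = ∏ j ∈ Finset.range 49, b j from by decide]; exact hprodA)
          (by norm_num) (by norm_num) (by norm_num) (by norm_num) (by norm_num) (by norm_num) (by norm_num)
      · exact midcase n 50 1274798332371873200080640130390915945864034234822833088465615176456520454934030058593750 200 1 11 2
          (by rw [show (1274798332371873200080640130390915945864034234822833088465615176456520454934030058593750:ℕ) = ∏ j ∈ Finset.range 50, b j from by decide]; exact hprodA)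
          (by norm_num) (by norm_num) (by norm_num) (by norm_num) (by norm_num) (by norm_num) (by norm_num)
      · exact midcase n 51 197593741517640346012499220210591971608925306397539128712170352350760670514774659082031250 205 1 11 2
          (by rw [show (197593741517640346012499220210591971608925306397539128712170352350760670514774659082031250:ℕ) = ∏ j ∈ Finset.range 51, b j from by decide]; exact hprodA)
          (by norm_num) (by norm_num) (by norm_num) (by norm_num) (by norm_num) (by norm_num) (by norm_num)
      · exact midcase n 52 31022217418269534323962377573062939542601273104413643207810745319069425270819621475878906250 210 1 11 2
          (by rw [show (31022217418269534323962377573062939542601273104413643207810745319069425270819621475878906250:ℕ) = ∏ j ∈ Finset.range 52, b j from by decide]; exact hprodA)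
          (by norm_num) (by norm_num) (by norm_num) (by norm_num) (by norm_num) (by norm_num) (by norm_num)
      · exact midcase n 53 4994577004341395026157942789263133266358804969810596556457529996370177468601959057616503906250 215 1 11 2
          (by rw [show (4994577004341395026157942789263133266358804969810596556457529996370177468601959057616503906250:ℕ) = ∏ j ∈ Finset.range 53, b j from by decide]; exact hprodA)
          (by norm_num) (by norm_num) (by norm_num) (by norm_num) (by norm_num) (by norm_num) (by norm_num)
      · exact midcase n 54 814116051707647389263744674649890722416485210079127238702577389408338927382119326391490136718750 220 1 11 2
          (by rw [show (814116051707647389263744674649890722416485210079127238702577389408338927382119326391490136718750:ℕ) = ∏ j ∈ Finset.range 54, b j from by decide]; exact hprodA)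
          (by norm_num) (by norm_num) (by norm_num) (by norm_num) (by norm_num) (by norm_num) (by norm_num)
    · push_neg at hk54
      apply tailcase k n (by omega)
      calc 3^(k-2) * Nat.factorial (k-2) ≤ ∏ j ∈ Finset.range k, b j := prod_b_ge k (by omega)
        _ ≤ n := hprodA
end
end
end
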